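/- arXiv:1909.06210 — 4 statements merged into one kernel-verified Lean document; each statement's English description precedes it below -/
import Mathlib

section
/- If h is a Hermitian N×N matrix with eigenvalues h₁,...,h_N and orthonormal eigenvectors ψ₁,...,ψ_N, then for any unitary U₀ the Cayley path satisfies U₀·f(θh) = q(θ)⁻¹ · Σ_α p_α(θ) · U₀|ψ_α⟩⟨ψ_α|, where q(θ) = Π_α (1 - iθh_α) and p_α(θ) = (1 + iθh_α)·Π_{β≠α}(1 - iθh_β); in particular every entry of U₀·f(θh) is a rational function of θ whose numerator and denominator are polynomials of degree at most N. -/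
open Matrix Finset

/-- Spectral form of the Cayley path: if `h` is Hermitian with eigenvalues
`hval α` and orthonormal eigenvectors `ψ α`, then for any unitary `U₀` and real
`θ` (with `q θ ≠ 0`),
`U₀ f(θh) = q(θ)⁻¹ • ∑ α, p_α(θ) • U₀ |ψ_α⟩⟨ψ_α|`, where
`q(θ) = ∏ α (1 - iθ h_α)` and `p_α(θ) = (1 + iθ h_α) ∏_{β ≠ α} (1 - iθ h_β)`. -/
theorem cayley_path_spectral {N : ℕ} (h U₀ : Matrix (Fin N) (Fin N) ℂ)
    (hval : Fin N → ℝ) (ψ : Fin N → (Fin N → ℂ))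
    (hherm : h.IsHermitian)
    (hU₀ : U₀ ∈ Matrix.unitaryGroup (Fin N) ℂ)
    (hortho : ∀ α β : Fin N, dotProduct (star ∘ ψ α) (ψ β) = if α = β then 1 else 0)
    (hspec : h = ∑ α : Fin N, (hval α : ℂ) • Matrix.vecMulVec (ψ α) (star ∘ ψ α))
    (θ : ℝ)
    (hq : (∏ α : Fin N, (1 - Complex.I * θ * hval α)) ≠ 0) :
    U₀ * ((1 + Complex.I • ((θ : ℂ) • h)) * (1 - Complex.I • ((θ : ℂ) • h))⁻¹)
      = (∏ α : Fin N, (1 - Complex.I * θ * hval α))⁻¹ •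
          ∑ α : Fin N,
            ((1 + Complex.I * θ * hval α) *
              ∏ β ∈ Finset.univ.erase α, (1 - Complex.I * θ * hval β)) •
            (U₀ * Matrix.vecMulVec (ψ α) (star ∘ ψ α)) := by
  classical
  set P : Fin N → Matrix (Fin N) (Fin N) ℂ :=
    fun α => Matrix.vecMulVec (ψ α) (star ∘ ψ α) with hP
  set c : Fin N → ℂ := fun α => Complex.I * θ * hval α with hc
  set d : Fin N → ℂ := fun α => 1 - c α with hd
  have dne : ∀ α, d α ≠ 0 := by
    intro α h0
    exact hq (Finset.prod_eq_zero (Finset.mem_univ α) h0)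
  have Pmul : ∀ α β, P α * P β = if α = β then P α else 0 := by
    intro α β
    have key := hortho α β
    ext i j
    have : (∑ k, (ψ α i * (star ∘ ψ α) k) * (ψ β k * (star ∘ ψ β) j))
        = (ψ α i * (star ∘ ψ β) j) * ((star ∘ ψ α) ⬝ᵥ ψ β) := by
      simp only [dotProduct, Finset.mul_sum]
      exact Finset.sum_congr rfl fun k _ => by ring
    simp only [hP, Matrix.mul_apply, Matrix.vecMulVec_apply]
    rw [this, key]
    by_cases hab : α = β
    · simp [hab, Matrix.vecMulVec_apply]
    · simp [hab]
  have Psum : ∑ α, P α = 1 := by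
    set V : Matrix (Fin N) (Fin N) ℂ := Matrix.of fun i α => ψ α i with hV
    have h1 : Vᴴ * V = 1 := by
      ext α β
      have := hortho α β
      simpa [Matrix.mul_apply, Matrix.conjTranspose_apply, dotProduct,
        Matrix.one_apply, hV, Function.comp] using this
    have h2 : V * Vᴴ = 1 := mul_eq_one_comm.mp h1
    ext i j
    calc (∑ α, P α) i j = (V * Vᴴ) i j := by
          simp [Matrix.sum_apply, Matrix.mul_apply, hP, Matrix.vecMulVec_apply,
            hV, Matrix.conjTranspose_apply, Function.comp]
      _ = (1 : Matrix (Fin N) (Fin N) ℂ) i j := by rw [h2]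
  have prodlem : ∀ (a b : Fin N → ℂ),
      (∑ α, a α • P α) * (∑ α, b α • P α) = ∑ α, (a α * b α) • P α := by
    intro a b
    rw [Matrix.sum_mul]
    refine Finset.sum_congr rfl fun α _ => ?_
    rw [Matrix.mul_sum, Finset.sum_eq_single α]
    · rw [smul_mul_smul_comm, Pmul, if_pos rfl]
    · intro β _ hβ
      rw [smul_mul_smul_comm, Pmul, if_neg (Ne.symm hβ), smul_zero]
    · intro habs; exact absurd (Finset.mem_univ α) habs
  have hplus : (1 + Complex.I • ((θ:ℂ) • h)) = ∑ α, (1 + c α) • P α := by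
    rw [hspec]
    nth_rewrite 1 [← Psum]
    rw [Finset.smul_sum, Finset.smul_sum, ← Finset.sum_add_distrib]
    refine Finset.sum_congr rfl fun α _ => ?_
    rw [add_smul, one_smul, smul_smul, smul_smul]
  have hminus : (1 - Complex.I • ((θ:ℂ) • h)) = ∑ α, d α • P α := by
    rw [hspec]
    nth_rewrite 1 [← Psum]
    rw [Finset.smul_sum, Finset.smul_sum, ← Finset.sum_sub_distrib]
    refine Finset.sum_congr rfl fun α _ => ?_
    rw [hd, sub_smul, one_smul, smul_smul, smul_smul]
  have hAB : (1 - Complex.I • ((θ:ℂ) • h)) * (∑ α, (d α)⁻¹ • P α) = 1 := by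
    rw [hminus, prodlem, ← Psum]
    exact Finset.sum_congr rfl fun α _ => by
      rw [mul_inv_cancel₀ (dne α), one_smul]
  have hinv := Matrix.inv_eq_right_inv hAB
  rw [hplus, hinv, prodlem, Matrix.mul_sum, Finset.smul_sum]
  refine Finset.sum_congr rfl fun α _ => ?_
  rw [mul_smul_comm, smul_smul]
  congr 1
  have hq' : d α * ∏ β ∈ Finset.univ.erase α, d β = ∏ β : Fin N, d β :=
    Finset.mul_prod_erase Finset.univ d (Finset.mem_univ α)
  have hE : (∏ β ∈ Finset.univ.erase α, d β) ≠ 0 :=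
    Finset.prod_ne_zero_iff.mpr fun β _ => dne β
  have hqprod : (∏ β : Fin N, d β) ≠ 0 := hq
  rw [← hq']
  field_simp [dne α, hE]
  ring
end

section
/- Given n distinct evaluation points (θᵢ, fᵢ) and a rational function F of degree (k₁, k₂), if F(θᵢ) = fᵢ for all but at most t indices and n > k₁ + k₂ + 2t, then F is the unique rational function of degree (k₁, k₂) agreeing with at least n - t of the values; i.e., any other rational function G of degree (k₁, k₂) agreeing with at least n - t of the values equals F. -/
open Polynomial Finset Classical

open scoped Classical

/-- Berlekamp–Welch uniqueness with errors: given `n > k₁ + k₂ + 2t` distinct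
evaluation points `(θᵢ, fᵢ)`, a rational function `F = P/Q` of degree
`(k₁, k₂)` agreeing with at least `n - t` of the values is unique: any other
rational function `G = P'/Q'` of degree `(k₁, k₂)` agreeing with at least
`n - t` of the values equals `F` (as a rational function, i.e. `P Q' = P' Q`). -/
theorem berlekamp_welch_error_correction {F : Type*} [Field F] (k₁ k₂ t n : ℕ)
    (hn : n > k₁ + k₂ + 2 * t)
    (θ : Fin n → F) (hθ : Function.Injective θ) (f : Fin n → F)
    (P Q P' Q' : Polynomial F)
    (hP : P.natDegree ≤ k₁) (hQ : Q.natDegree ≤ k₂)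
    (hP' : P'.natDegree ≤ k₁) (hQ' : Q'.natDegree ≤ k₂)
    (hQne : ∀ i, Q.eval (θ i) ≠ 0) (hQ'ne : ∀ i, Q'.eval (θ i) ≠ 0)
    (hFagree : n - t ≤ (Finset.univ.filter
      (fun i => P.eval (θ i) / Q.eval (θ i) = f i)).card)
    (hGagree : n - t ≤ (Finset.univ.filter
      (fun i => P'.eval (θ i) / Q'.eval (θ i) = f i)).card) :
    P * Q' = P' * Q := by
  classical
  set A := Finset.univ.filter (fun i => P.eval (θ i) / Q.eval (θ i) = f i) with hA
  set B := Finset.univ.filter (fun i => P'.eval (θ i) / Q'.eval (θ i) = f i) with hB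
  have hcardAB : n - 2 * t ≤ (A ∩ B).card := by
    have h1 : A.card + B.card - n ≤ (A ∩ B).card := by
      have := Finset.card_union_add_card_inter A B
      have hun : (A ∪ B).card ≤ n := by
        simpa using (Finset.card_le_card (Finset.subset_univ (A ∪ B)))
      omega
    omega
  have hroots : ∀ i ∈ A ∩ B, (P * Q' - P' * Q).eval (θ i) = 0 := by
    intro i hi
    rw [Finset.mem_inter, hA, hB, Finset.mem_filter, Finset.mem_filter] at hi
    have h1 := hi.1.2
    have h2 := hi.2.2
    have : P.eval (θ i) / Q.eval (θ i) = P'.eval (θ i) / Q'.eval (θ i) := by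
      rw [h1, h2]
    rw [div_eq_div_iff (hQne i) (hQ'ne i)] at this
    simp only [eval_sub, eval_mul]
    linear_combination this
  have hinj : Function.Injective (fun i : (A ∩ B : Finset (Fin n)) => θ i.1) :=
    fun a b hab => Subtype.ext (hθ hab)
  have hdeg : (P * Q' - P' * Q).natDegree < Fintype.card (A ∩ B : Finset (Fin n)) := by
    have d1 : (P * Q').natDegree ≤ k₁ + k₂ :=
      (natDegree_mul_le).trans (add_le_add hP hQ')
    have d2 : (P' * Q).natDegree ≤ k₁ + k₂ :=
      (natDegree_mul_le).trans (add_le_add hP' hQ)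
    have := natDegree_sub_le (P * Q') (P' * Q)
    rw [Fintype.card_coe]
    omega
  have hz := Polynomial.eq_zero_of_natDegree_lt_card_of_eval_eq_zero
    (P * Q' - P' * Q) hinj (fun i => hroots i.1 i.2) hdeg
  have := sub_eq_zero.mp hz
  exact this
end

section
/- Let p be a polynomial of degree d with complex coefficients and suppose |p(z)| ≤ ε for all real z with |z| ≤ Δ, where 0 < Δ ≤ 1. Then |p(-1)| ≤ ε · exp(2d(1 + 1/Δ)). -/
open Polynomial

open Finset

lemma nat_prod_sub (j : ℕ) : ∏ k ∈ Finset.range j, (j - k) = j.factorial := by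
  induction j with
  | zero => simp
  | succ n ih =>
    rw [Finset.prod_range_succ']
    simp only [Nat.add_sub_add_right, Nat.sub_zero, ih]
    rw [Nat.factorial_succ, Nat.mul_comm]

lemma fact_prod (d j : ℕ) (hj : j < d + 1) :
    ∏ k ∈ (Finset.range (d + 1)).erase j, |(j : ℝ) - k| =
      ((j.factorial * (d - j).factorial : ℕ) : ℝ) := by
  have hset : (Finset.range (d + 1)).erase j =
      Finset.range j ∪ Finset.Ico (j + 1) (d + 1) := by
    ext k
    simp only [Finset.mem_erase, Finset.mem_range, Finset.mem_union, Finset.mem_Ico]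
    omega
  have hdisj : Disjoint (Finset.range j) (Finset.Ico (j + 1) (d + 1)) := by
    simp only [Finset.disjoint_left, Finset.mem_range, Finset.mem_Ico]
    intro a ha
    omega
  rw [hset, Finset.prod_union hdisj]
  have h1 : ∏ k ∈ Finset.range j, |(j : ℝ) - k| = (j.factorial : ℝ) := by
    have : ∀ k ∈ Finset.range j, |(j : ℝ) - k| = ((j - k : ℕ) : ℝ) := by
      intro k hk
      rw [Finset.mem_range] at hk
      rw [Nat.cast_sub hk.le, abs_of_nonneg]
      have : (k : ℝ) ≤ j := by exact_mod_cast hk.le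
      linarith
    rw [Finset.prod_congr rfl this, ← Nat.cast_prod, nat_prod_sub]
  have h2 : ∏ k ∈ Finset.Ico (j + 1) (d + 1), |(j : ℝ) - k| = ((d - j).factorial : ℝ) := by
    rw [Finset.prod_Ico_eq_prod_range]
    have heq : ∀ i ∈ Finset.range (d + 1 - (j + 1)), |(j : ℝ) - ((j + 1 + i : ℕ) : ℝ)| = ((i + 1 : ℕ) : ℝ) := by
      intro i _
      push_cast
      rw [show (j:ℝ) - (j + 1 + i) = -(i+1) by ring, abs_neg, abs_of_nonneg (by positivity)]
    rw [Finset.prod_congr rfl heq, ← Nat.cast_prod]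
    congr 1
    have : d + 1 - (j + 1) = d - j := by omega
    rw [this]
    induction (d - j) with
    | zero => simp
    | succ n ih => rw [Finset.prod_range_succ, ih, Nat.factorial_succ, Nat.mul_comm]
  rw [h1, h2, Nat.cast_mul]

lemma choose_bound (d j : ℕ) (hj : j ≤ d) :
    (d.factorial : ℝ) ≤ 2 ^ d * (j.factorial * (d - j).factorial) := by
  have h1 : d.choose j ≤ 2 ^ d := by
    calc d.choose j ≤ ∑ m ∈ range (d + 1), d.choose m :=
          single_le_sum (fun i _ => Nat.zero_le _) (by simp [Nat.lt_succ_iff, hj])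
      _ = 2 ^ d := Nat.sum_range_choose d
  have h2 : d.choose j * (j.factorial * (d - j).factorial) = d.factorial := by
    rw [← Nat.mul_assoc]; exact Nat.choose_mul_factorial_mul_factorial hj
  have : d.factorial ≤ 2 ^ d * (j.factorial * (d - j).factorial) := by
    rw [← h2]; exact Nat.mul_le_mul_right _ h1
  exact_mod_cast this

/-- Paturi's lemma: if `p` is a polynomial of degree at most `d` with
`|p(z)| ≤ ε` for all real `z` with `|z| ≤ Δ`, `0 < Δ ≤ 1`, then
`|p(-1)| ≤ ε · exp (2d(1 + 1/Δ))`. -/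
theorem paturi (p : Polynomial ℂ) (d : ℕ) (ε Δ : ℝ)
    (hd : p.natDegree ≤ d) (hΔ0 : 0 < Δ) (hΔ1 : Δ ≤ 1)
    (hbound : ∀ z : ℝ, |z| ≤ Δ → ‖p.eval (z : ℂ)‖ ≤ ε) :
    ‖p.eval (-1 : ℂ)‖ ≤ ε * Real.exp (2 * d * (1 + 1 / Δ)) := by
  have hε : 0 ≤ ε := le_trans (norm_nonneg _) (hbound 0 (by simp [hΔ0.le]))
  rcases Nat.eq_zero_or_pos d with hd0 | hd1
  · subst hd0
    obtain ⟨a, rfl⟩ := Polynomial.natDegree_eq_zero.mp (Nat.le_zero.mp hd)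
    simpa using hbound 0 (by simp [hΔ0.le])
  -- setup
  have hD : (0 : ℝ) < d := by exact_mod_cast hd1
  set w : ℕ → ℝ := fun k => Δ * (2 * k / d - 1) with hw
  set v : ℕ → ℂ := fun k => ((w k : ℝ) : ℂ) with hv
  set s : Finset ℕ := Finset.range (d + 1) with hs
  have hdiff : ∀ j k : ℕ, w j - w k = 2 * Δ / d * ((j : ℝ) - k) := by
    intro j k; simp only [hw]; field_simp; ring
  have hwabs : ∀ k ∈ s, |w k| ≤ Δ := by
    intro k hk
    rw [Finset.mem_range] at hk
    have hk' : (k : ℝ) ≤ d := by exact_mod_cast Nat.lt_succ_iff.mp hk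
    have hk2 : (0:ℝ) ≤ 2 * k / d := by positivity
    have hk3 : 2 * (k:ℝ) / d ≤ 2 := by rw [div_le_iff₀ hD]; nlinarith
    simp only [hw]
    rw [abs_le]
    constructor <;> nlinarith
  have hinj : Set.InjOn v s := by
    intro a _ b _ hab
    have : w a = w b := Complex.ofReal_inj.mp hab
    have h2 : w a - w b = 0 := by rw [this]; ring
    rw [hdiff] at h2
    have : (a : ℝ) = b := by
      rcases mul_eq_zero.mp h2 with h | h
      · exfalso; revert h; positivity
      · linarith
    exact_mod_cast this
  have hdeg : p.degree < (s.card : WithBot ℕ) := by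
    rw [hs, Finset.card_range]
    calc p.degree ≤ (p.natDegree : WithBot ℕ) := Polynomial.degree_le_natDegree
      _ ≤ (d : WithBot ℕ) := by exact_mod_cast hd
      _ < ((d + 1 : ℕ) : WithBot ℕ) := by exact_mod_cast Nat.lt_succ_self d
  have hinterp := Lagrange.eq_interpolate hinj hdeg
  -- expand eval at -1
  have heval : p.eval (-1 : ℂ) =
      ∑ j ∈ s, p.eval (v j) * (Lagrange.basis s v j).eval (-1 : ℂ) := by
    conv_lhs => rw [hinterp]
    rw [Lagrange.interpolate_apply, Polynomial.eval_finset_sum]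
    exact Finset.sum_congr rfl fun j _ => by rw [Polynomial.eval_mul, Polynomial.eval_C]
  rw [heval]
  -- bound each term
  have key : ∀ j ∈ s,
      ‖p.eval (v j) * (Lagrange.basis s v j).eval (-1 : ℂ)‖ ≤
        ε * ((2 * d / Δ) ^ d / d.factorial) := by
    intro j hj
    have hjd : j ≤ d := Nat.lt_succ_iff.mp (Finset.mem_range.mp hj)
    rw [norm_mul]
    have hp : ‖p.eval (v j)‖ ≤ ε := hbound (w j) (hwabs j hj)
    have hbasis : ‖(Lagrange.basis s v j).eval (-1 : ℂ)‖ ≤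
        (2 * d / Δ) ^ d / d.factorial := by
      rw [Lagrange.basis, Polynomial.eval_prod, norm_prod]
      have hcard : (s.erase j).card = d := by
        rw [Finset.card_erase_of_mem hj, hs, Finset.card_range]; rfl
      have hfac : ∀ k ∈ s.erase j,
          ‖(Lagrange.basisDivisor (v j) (v k)).eval (-1 : ℂ)‖ ≤
            (d / Δ) * |(j : ℝ) - k|⁻¹ := by
        intro k hk
        have hkj : k ≠ j := (Finset.mem_erase.mp hk).1
        have hks : k ∈ s := (Finset.mem_erase.mp hk).2
        rw [Lagrange.basisDivisor, Polynomial.eval_mul, Polynomial.eval_C,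
          Polynomial.eval_sub, Polynomial.eval_X, Polynomial.eval_C, norm_mul, norm_inv]
        have habs1 : ‖v j - v k‖ = |w j - w k| := by
          rw [hv]; rw [← Complex.ofReal_sub, Complex.norm_real, Real.norm_eq_abs]
        have habs2 : ‖(-1 : ℂ) - v k‖ = |(-1 : ℝ) - w k| := by
          rw [hv]; rw [show (-1 : ℂ) - ((w k : ℝ) : ℂ) = (((-1 : ℝ) - w k : ℝ) : ℂ) by push_cast; ring,
            Complex.norm_real, Real.norm_eq_abs]
        rw [habs1, habs2, hdiff, abs_mul]
        have hjk : (0:ℝ) < |(j : ℝ) - k| := by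
          rw [abs_pos]
          intro h
          exact hkj (by exact_mod_cast (sub_eq_zero.mp h).symm)
        have h2d : |2 * Δ / d| = 2 * Δ / d := abs_of_pos (by positivity)
        rw [h2d, mul_inv]
        have hwk : |(-1 : ℝ) - w k| ≤ 2 := by
          have := hwabs k hks
          rw [abs_le] at this ⊢
          constructor <;> nlinarith
        calc (2 * Δ / d)⁻¹ * |(j : ℝ) - k|⁻¹ * |(-1 : ℝ) - w k|
            ≤ (2 * Δ / d)⁻¹ * |(j : ℝ) - k|⁻¹ * 2 := by
              apply mul_le_mul_of_nonneg_left hwk; positivity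
          _ = (d / Δ) * |(j : ℝ) - k|⁻¹ := by
              rw [inv_div]; field_simp
      calc ∏ k ∈ s.erase j, ‖(Lagrange.basisDivisor (v j) (v k)).eval (-1 : ℂ)‖
          ≤ ∏ k ∈ s.erase j, (d / Δ) * |(j : ℝ) - k|⁻¹ :=
            Finset.prod_le_prod (fun k _ => norm_nonneg _) hfac
        _ = (d / Δ) ^ d * (∏ k ∈ s.erase j, |(j : ℝ) - k|)⁻¹ := by
            rw [Finset.prod_mul_distrib, Finset.prod_const, hcard, ← Finset.prod_inv_distrib]
        _ = (d / Δ) ^ d * ((j.factorial * (d - j).factorial : ℕ) : ℝ)⁻¹ := by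
            rw [hs, fact_prod d j (Finset.mem_range.mp hj)]
        _ ≤ (d / Δ) ^ d * (2 ^ d / d.factorial) := by
            apply mul_le_mul_of_nonneg_left _ (by positivity)
            have hcb := choose_bound d j hjd
            have hfpos : (0:ℝ) < ((j.factorial * (d - j).factorial : ℕ) : ℝ) := by
              have := Nat.factorial_pos j
              have := Nat.factorial_pos (d - j)
              positivity
            have hdf : (0:ℝ) < (d.factorial : ℝ) := by
              exact_mod_cast Nat.factorial_pos d
            rw [inv_eq_one_div, div_le_div_iff₀ hfpos hdf]
            push_cast at hcb ⊢
            nlinarith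
        _ = (2 * d / Δ) ^ d / d.factorial := by
            field_simp
            ring
    exact mul_le_mul hp hbasis (norm_nonneg _) hε
  calc ‖∑ j ∈ s, p.eval (v j) * (Lagrange.basis s v j).eval (-1 : ℂ)‖
      ≤ ∑ j ∈ s, ‖p.eval (v j) * (Lagrange.basis s v j).eval (-1 : ℂ)‖ := by
        exact norm_sum_le _ _
    _ ≤ ∑ _j ∈ s, ε * ((2 * d / Δ) ^ d / d.factorial) := Finset.sum_le_sum key
    _ = (d + 1 : ℝ) * (ε * ((2 * d / Δ) ^ d / d.factorial)) := by
        rw [Finset.sum_const, hs, Finset.card_range]; push_cast; ring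
    _ ≤ ε * Real.exp (2 * d * (1 + 1 / Δ)) := by
        have e1 : (d : ℝ) + 1 ≤ Real.exp (2 * d) :=
          le_trans (Real.add_one_le_exp d) (Real.exp_le_exp.mpr (by linarith))
        have e2 : (2 * d / Δ) ^ d / d.factorial ≤ Real.exp (2 * d / Δ) :=
          Real.pow_div_factorial_le_exp _ (by positivity) d
        have harg : 2 * (d:ℝ) + 2 * d / Δ = 2 * d * (1 + 1 / Δ) := by
          field_simp
        have e3 : ((d : ℝ) + 1) * ((2 * d / Δ) ^ d / d.factorial) ≤
            Real.exp (2 * d * (1 + 1 / Δ)) := by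
          have h4 := mul_le_mul e1 e2 (by positivity) (Real.exp_nonneg _)
          rwa [← Real.exp_add, harg] at h4
        calc ((d : ℝ) + 1) * (ε * ((2 * d / Δ) ^ d / d.factorial))
            = ε * (((d : ℝ) + 1) * ((2 * d / Δ) ^ d / d.factorial)) := by ring
          _ ≤ ε * Real.exp (2 * d * (1 + 1 / Δ)) :=
              mul_le_mul_of_nonneg_left e3 hε
end

section
/- For θ = 1 + δ with |δ| ≤ Δ ≤ 1/2 and r ∈ (-π, π), the function ν(r) = 2·arctan(θ·tan(r/2)) satisfies |ν(r) - r - δ·sin(r)| ≤ C·δ² for a constant C independent of r and δ. -/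
open Real

lemma abs_arctan_sub_le (x : ℝ) : |Real.arctan x - x| ≤ |x| ^ 3 := by
  have key : ∀ y : ℝ, 0 ≤ y → |Real.arctan y - y| ≤ |y| ^ 3 := by
    intro y hy
    have hder : ∀ z ∈ Set.Icc (0:ℝ) y,
        HasDerivWithinAt (fun u => Real.arctan u - u) (1 / (1 + z ^ 2) - 1) (Set.Icc 0 y) z :=
      fun z _ => ((Real.hasDerivAt_arctan z).sub (hasDerivAt_id z)).hasDerivWithinAt
    have bound : ∀ z ∈ Set.Ico (0:ℝ) y, ‖(1 / (1 + z ^ 2) - 1 : ℝ)‖ ≤ y ^ 2 := by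
      intro z hz
      obtain ⟨hz0, hzy⟩ := hz
      have h1 : (0:ℝ) < 1 + z ^ 2 := by positivity
      have he : (1 / (1 + z ^ 2) - 1 : ℝ) = -(z ^ 2 / (1 + z ^ 2)) := by field_simp; ring
      rw [he, norm_neg, Real.norm_eq_abs, abs_of_nonneg (by positivity)]
      calc z ^ 2 / (1 + z ^ 2) ≤ z ^ 2 := by
            apply div_le_self (by positivity); nlinarith
        _ ≤ y ^ 2 := by nlinarith
    have h := norm_image_sub_le_of_norm_deriv_le_segment' hder bound y (Set.right_mem_Icc.2 hy)
    simp only [Real.arctan_zero, sub_zero, Real.norm_eq_abs] at h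
    calc |Real.arctan y - y| ≤ y ^ 2 * y := h
      _ = |y| ^ 3 := by rw [abs_of_nonneg hy]; ring
  rcases le_or_gt 0 x with h | h
  · exact key x h
  · have h2 := key (-x) (by linarith)
    rw [Real.arctan_neg, abs_neg] at h2
    calc |Real.arctan x - x| = |-(Real.arctan x) - -x| := by rw [abs_sub_comm]; ring_nf
      _ ≤ |x| ^ 3 := h2

lemma cube_le_aux (s E : ℝ) (hs : 0 ≤ s) (hE : (1 + s ^ 2) / 2 ≤ E) :
    s ^ 3 ≤ E * (1 + s ^ 2) := by
  nlinarith [sq_nonneg (s ^ 2 - s), sq_nonneg s,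
    mul_le_mul_of_nonneg_right hE (by positivity : (0:ℝ) ≤ 1 + s ^ 2)]

/-- First-order expansion of the eigenvalue map near `θ = 1`: there is a
constant `C`, independent of `r` and `δ`, such that for `θ = 1 + δ` with
`|δ| ≤ Δ ≤ 1/2` and `r ∈ (-π, π)`,
`|2 arctan((1+δ) tan (r/2)) - r - δ sin r| ≤ C δ²`. -/
theorem eigenvalue_map_expansion :
    ∃ C : ℝ, ∀ Δ δ r : ℝ, |δ| ≤ Δ → Δ ≤ 1 / 2 → r ∈ Set.Ioo (-π) π →
      |2 * Real.arctan ((1 + δ) * Real.tan (r / 2)) - r - δ * Real.sin r| ≤ C * δ ^ 2 := by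
  refine ⟨3, ?_⟩
  intro Δ δ r hδΔ hΔ hr
  obtain ⟨hr1, hr2⟩ := hr
  have hπ := Real.pi_pos
  have hδ : |δ| ≤ 1 / 2 := hδΔ.trans hΔ
  have hδl : -(1/2) ≤ δ := (abs_le.1 hδ).1
  have hδu : δ ≤ 1/2 := (abs_le.1 hδ).2
  set t := Real.tan (r / 2) with ht
  have ht2 : (0:ℝ) < 1 + t ^ 2 := by positivity
  have hcos : r = 2 * Real.arctan t := by
    rw [ht, Real.arctan_tan (by linarith) (by linarith)]; ring
  have hcpos : 0 < Real.cos (r / 2) :=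
    Real.cos_pos_of_mem_Ioo ⟨by linarith, by linarith⟩
  have hsin : Real.sin r = 2 * t / (1 + t ^ 2) := by
    have h1 : Real.sin r = 2 * t * Real.cos (r / 2) ^ 2 := by
      conv_lhs => rw [show r = 2 * (r / 2) by ring]
      rw [Real.sin_two_mul, ht, Real.tan_eq_sin_div_cos]
      field_simp
    have h2 : ((1:ℝ) + t ^ 2)⁻¹ = Real.cos (r / 2) ^ 2 :=
      Real.inv_one_add_tan_sq hcpos.ne'
    rw [h1, ← h2]
    field_simp
  clear_value t
  set D := 1 + (1 + δ) * t ^ 2 with hDdef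
  have hD2 : (1 + t ^ 2) / 2 ≤ D := by nlinarith [sq_nonneg t]
  have hD0 : 0 < D := by nlinarith [sq_nonneg t]
  clear_value D
  set x := δ * t / D with hxdef
  clear_value x
  have hsplit : 2 * Real.arctan ((1 + δ) * t) - r = 2 * Real.arctan x := by
    have hprod : ((1 + δ) * t) * (-t) < 1 := by nlinarith [sq_nonneg t]
    have hadd := Real.arctan_add hprod
    rw [Real.arctan_neg] at hadd
    have harg : ((1 + δ) * t + -t) / (1 - (1 + δ) * t * -t) = x := by
      rw [hxdef, hDdef]
      congr 1 <;> ring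
    rw [harg] at hadd
    rw [hcos]
    linarith [hadd]
  have habs_t : |t| ≤ D := by
    have h := abs_nonneg t
    nlinarith [sq_nonneg (|t| - 1), sq_abs t]
  have hx_le : |x| ≤ |δ| := by
    rw [hxdef, abs_div, abs_of_pos hD0, abs_mul, div_le_iff₀ hD0]
    exact mul_le_mul_of_nonneg_left habs_t (abs_nonneg δ)
  have harct : |Real.arctan x - x| ≤ |x| ^ 3 := abs_arctan_sub_le x
  have hterm1 : 2 * |Real.arctan x - x| ≤ δ ^ 2 := by
    have h1 : |x| ^ 2 ≤ δ ^ 2 := by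
      rw [← sq_abs δ]; exact pow_le_pow_left₀ (abs_nonneg x) hx_le 2
    have h2 : |x| ≤ 1 / 2 := hx_le.trans hδ
    have h3 : |x| ^ 3 ≤ δ ^ 2 * (1 / 2) := by
      calc |x| ^ 3 = |x| ^ 2 * |x| := by ring
        _ ≤ δ ^ 2 * (1 / 2) :=
            mul_le_mul h1 h2 (abs_nonneg x) (sq_nonneg δ)
    linarith [harct]
  have hterm2 : |x - δ * t / (1 + t ^ 2)| ≤ δ ^ 2 := by
    have heq : x - δ * t / (1 + t ^ 2) = -(δ ^ 2 * t ^ 3) / (D * (1 + t ^ 2)) := by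
      rw [hxdef, div_sub_div _ _ hD0.ne' ht2.ne', hDdef]
      congr 1
      ring
    rw [heq, abs_div, abs_neg, abs_of_pos (by positivity : (0:ℝ) < D * (1 + t ^ 2))]
    rw [div_le_iff₀ (by positivity : (0:ℝ) < D * (1 + t ^ 2))]
    have habs : |δ ^ 2 * t ^ 3| = δ ^ 2 * |t| ^ 3 := by
      rw [abs_mul, abs_pow, abs_pow, sq_abs]
    rw [habs]
    have hcube : |t| ^ 3 ≤ D * (1 + t ^ 2) := by
      have hD2' : (1 + |t| ^ 2) / 2 ≤ D := by rw [sq_abs]; exact hD2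
      have h := cube_le_aux |t| D (abs_nonneg t) hD2'
      rwa [sq_abs] at h
    exact mul_le_mul_of_nonneg_left hcube (sq_nonneg δ)
  have key : 2 * Real.arctan ((1 + δ) * t) - r - δ * Real.sin r
      = 2 * (Real.arctan x - x) + 2 * (x - δ * t / (1 + t ^ 2)) := by
    rw [hsin]
    have : δ * (2 * t / (1 + t ^ 2)) = 2 * (δ * t / (1 + t ^ 2)) := by ring
    rw [this]
    linarith [hsplit]
  rw [key]
  calc |2 * (Real.arctan x - x) + 2 * (x - δ * t / (1 + t ^ 2))|
      ≤ |2 * (Real.arctan x - x)| + |2 * (x - δ * t / (1 + t ^ 2))| := abs_add_le _ _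
    _ = 2 * |Real.arctan x - x| + 2 * |x - δ * t / (1 + t ^ 2)| := by
        rw [abs_mul, abs_mul]; norm_num
    _ ≤ δ ^ 2 + 2 * δ ^ 2 := by linarith [hterm1, hterm2]
    _ = 3 * δ ^ 2 := by ring
end
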